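/- arXiv:2009.14308 — 5 statements merged into one kernel-verified Lean document; each statement's English description precedes it below -/
import Mathlib

section
/- For vectors q_i, k_j in ℝ^D and priors α_j = exp(½ k_j·k_j)/Z (Z a normalizer), the posterior responsibility α_j·N(q_i | k_j, I) / ∑_{j'} α_{j'}·N(q_i | k_{j'}, I) of unit-variance Gaussian component j for data q_i equals the softmax weight exp(q_i·k_j) / ∑_{j'} exp(q_i·k_{j'}). -/
open Finset Real

/-- Density of a Gaussian in `ℝ^D` with mean `μ` and identity covariance. -/
noncomputable def gaussDensity (D : ℕ) (x μ : EuclideanSpace ℝ (Fin D)) : ℝ :=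
  (2 * Real.pi) ^ (-(D : ℝ) / 2) * Real.exp (-(1 / 2) * ‖x - μ‖ ^ 2)

theorem gmm_responsibility_eq_softmax (S D : ℕ) (hS : 0 < S)
    (q : EuclideanSpace ℝ (Fin D)) (k : Fin S → EuclideanSpace ℝ (Fin D))
    (Z : ℝ) (hZ : Z = ∑ j, Real.exp ((1 / 2) * (inner ℝ (k j) (k j) : ℝ)))
    (α : Fin S → ℝ)
    (hα : ∀ j, α j = Real.exp ((1 / 2) * (inner ℝ (k j) (k j) : ℝ)) / Z) (j : Fin S) :
    α j * gaussDensity D q (k j) / (∑ j', α j' * gaussDensity D q (k j'))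
      = Real.exp (inner ℝ q (k j) : ℝ) / ∑ j', Real.exp (inner ℝ q (k j') : ℝ) := by
  set c : ℝ := (2 * Real.pi) ^ (-(D : ℝ) / 2) / Z * Real.exp (-(1 / 2) * ‖q‖ ^ 2) with hc
  have hkey : ∀ j' : Fin S, α j' * gaussDensity D q (k j')
      = c * Real.exp (inner ℝ q (k j') : ℝ) := by
    intro j'
    rw [hα j', gaussDensity, hc]
    have hnorm : ‖q - k j'‖ ^ 2 = ‖q‖ ^ 2 - 2 * (inner ℝ q (k j') : ℝ) + ‖k j'‖ ^ 2 := by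
      rw [@norm_sub_sq_real]
    have hself : (inner ℝ (k j') (k j') : ℝ) = ‖k j'‖ ^ 2 := real_inner_self_eq_norm_sq _
    rw [hnorm, hself]
    have he : Real.exp (1 / 2 * ‖k j'‖ ^ 2) *
        Real.exp (-(1 / 2) * (‖q‖ ^ 2 - 2 * (inner ℝ q (k j') : ℝ) + ‖k j'‖ ^ 2))
        = Real.exp (-(1 / 2) * ‖q‖ ^ 2) * Real.exp (inner ℝ q (k j') : ℝ) := by
      rw [← Real.exp_add, ← Real.exp_add]; ring_nf
    linear_combination ((2 * Real.pi) ^ (-(D : ℝ) / 2) / Z) * he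
  have hZpos : 0 < Z := by
    rw [hZ]
    exact Finset.sum_pos (fun i _ => Real.exp_pos _) (by simpa using Finset.univ_nonempty_iff.2 ⟨⟨0, hS⟩⟩)
  have hcpos : 0 < c := by
    apply mul_pos (div_pos (Real.rpow_pos_of_pos (by positivity) _) hZpos) (Real.exp_pos _)
  rw [hkey j]
  rw [Finset.sum_congr rfl (fun j' _ => hkey j'), ← Finset.mul_sum,
    mul_div_mul_left _ _ (ne_of_gt hcpos)]
end

section
/- Let π^0 be a strictly positive S×S matrix and apply one step of column normalization followed by row normalization: ξ_{ij} = π^0_{ij}/∑_i π^0_{ij}, π_{ij} = ξ_{ij}/∑_j ξ_{ij}. Then π has all row sums equal to 1, and every column sum of π lies in the interval [1/S, S]. -/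
open Finset

theorem dnas_row_sums_one_and_column_sums_bounded (S : ℕ) (hS : 0 < S)
    (p0 : Fin S → Fin S → ℝ) (hpos : ∀ i j, 0 < p0 i j)
    (ξ : Fin S → Fin S → ℝ) (hξ : ∀ i j, ξ i j = p0 i j / ∑ i', p0 i' j)
    (p : Fin S → Fin S → ℝ) (hp : ∀ i j, p i j = ξ i j / ∑ j', ξ i j') :
    (∀ i, ∑ j, p i j = 1) ∧
    ∀ j, (1 : ℝ) / S ≤ ∑ i, p i j ∧ ∑ i, p i j ≤ S := by
  have hcol : ∀ j, 0 < ∑ i', p0 i' j := fun j =>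
    Finset.sum_pos (fun i _ => hpos i j) ⟨⟨0, hS⟩, Finset.mem_univ _⟩
  have hξpos : ∀ i j, 0 < ξ i j := fun i j => by
    rw [hξ]; exact div_pos (hpos i j) (hcol j)
  have hξle1 : ∀ i j, ξ i j ≤ 1 := fun i j => by
    rw [hξ]
    exact div_le_one_of_le₀
      (Finset.single_le_sum (fun i' _ => (hpos i' j).le) (Finset.mem_univ i)) (hcol j).le
  have hRpos : ∀ i, 0 < ∑ j', ξ i j' := fun i =>
    Finset.sum_pos (fun j _ => hξpos i j) ⟨⟨0, hS⟩, Finset.mem_univ _⟩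
  have hRleS : ∀ i, (∑ j', ξ i j') ≤ S := fun i => by
    calc (∑ j', ξ i j') ≤ ∑ _j' : Fin S, (1 : ℝ) :=
          Finset.sum_le_sum (fun j _ => hξle1 i j)
      _ = S := by simp
  have hξcol : ∀ j, ∑ i, ξ i j = 1 := fun j => by
    simp only [hξ, ← Finset.sum_div]
    exact div_self (hcol j).ne'
  have hrow : ∀ i, ∑ j, p i j = 1 := fun i => by
    simp only [hp, ← Finset.sum_div]
    exact div_self (hRpos i).ne'
  refine ⟨hrow, fun j => ⟨?_, ?_⟩⟩
  · calc (1 : ℝ) / S = (∑ i, ξ i j) / S := by rw [hξcol]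
      _ = ∑ i, ξ i j / S := Finset.sum_div _ _ _
      _ ≤ ∑ i, p i j := by
          refine Finset.sum_le_sum fun i _ => ?_
          rw [hp]
          exact div_le_div_of_nonneg_left (hξpos i j).le (hRpos i) (hRleS i)
  · calc ∑ i, p i j ≤ ∑ _i : Fin S, (1 : ℝ) := by
          refine Finset.sum_le_sum fun i _ => ?_
          rw [hp]
          exact div_le_one_of_le₀
            (Finset.single_le_sum (fun j' _ => (hξpos i j').le) (Finset.mem_univ j))
            (hRpos i).le
      _ = S := by simp
end

section
/- In the 1-D two-cluster model, the post-attention center distance under upper-normalized attention is d_U(r,s) = 2r(1−s²)a / ((1+rs)(r+s)), where r = N₀/N₁ > 0, s = exp(−2a²) ∈ (0,1), a > 0. Then 0 < d_U(r,s) < 2a, i.e., the distance between cluster centers strictly decreases after the attention update. -/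
theorem unas_center_distance_strictly_decreases (a r s dU : ℝ)
    (ha : 0 < a) (hr : 0 < r) (hs : s = Real.exp (-2 * a ^ 2))
    (hdU : dU = 2 * r * (1 - s ^ 2) * a / ((1 + r * s) * (r + s))) :
    0 < dU ∧ dU < 2 * a := by
  have hs0 : 0 < s := hs ▸ Real.exp_pos _
  have hs1 : s < 1 := by
    rw [hs, Real.exp_lt_one_iff]
    nlinarith
  have hden : 0 < (1 + r * s) * (r + s) := by positivity
  constructor
  · rw [hdU]
    have h1 : 0 < 1 - s ^ 2 := by nlinarith
    positivity
  · rw [hdU, div_lt_iff₀ hden]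
    nlinarith [mul_pos hr hs0, mul_pos (mul_pos hr hr) hs0, mul_pos hr (mul_pos hs0 hs0), mul_pos ha hs0]
end

section
/- With r > 0, 0 < s < 1, a > 0, and q = (r+s)/(rs+1), the doubly-normalized center distance d_D = 2qr(1−s²)a/((q+rs)(r+sq)) is greater than or equal to the upper-normalized center distance d_U = 2r(1−s²)a/((1+rs)(r+s)), with equality if and only if r = 1. -/
theorem dnas_center_distance_ge_unas (a r s q dD dU : ℝ)
    (ha : 0 < a) (hr : 0 < r) (hs0 : 0 < s) (hs1 : s < 1)
    (hq : q = (r + s) / (r * s + 1))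
    (hdD : dD = 2 * q * r * (1 - s ^ 2) * a / ((q + r * s) * (r + s * q)))
    (hdU : dU = 2 * r * (1 - s ^ 2) * a / ((1 + r * s) * (r + s))) :
    dU ≤ dD ∧ (dD = dU ↔ r = 1) := by
  have hc : (0:ℝ) < r * s + 1 := by positivity
  have hc' : r * s + 1 ≠ 0 := ne_of_gt hc
  have hA : (0:ℝ) < (r + s) + r * s * (r * s + 1) := by positivity
  have hB : (0:ℝ) < r * (r * s + 1) + s * (r + s) := by positivity
  have hq1 : q + r * s = ((r + s) + r * s * (r * s + 1)) / (r * s + 1) := by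
    rw [hq]; field_simp
  have hq2 : r + s * q = (r * (r * s + 1) + s * (r + s)) / (r * s + 1) := by
    rw [hq]; field_simp
  have hDen : (q + r * s) * (r + s * q)
      = ((r + s) + r * s * (r * s + 1)) * (r * (r * s + 1) + s * (r + s)) / ((r * s + 1) * (r * s + 1)) := by
    rw [hq1, hq2]; field_simp
  have key : dD - dU = (2 * r * (1 - s ^ 2) * a) *
      (s * (1 - s) * (r - 1) ^ 2 * (r + s * (r ^ 2 + r + 1))) /
      ((((r + s) + r * s * (r * s + 1)) * (r * (r * s + 1) + s * (r + s))) * ((1 + r * s) * (r + s))) := by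
    rw [hdD, hdU, hDen, hq]
    have h1 : ((r + s) + r * s * (r * s + 1)) ≠ 0 := ne_of_gt hA
    have h2 : (r * (r * s + 1) + s * (r + s)) ≠ 0 := ne_of_gt hB
    have h3 : (1 + r * s) ≠ 0 := by positivity
    have h4 : (r + s) ≠ 0 := by positivity
    field_simp
    ring
  have hs2 : (0:ℝ) < 1 - s ^ 2 := by nlinarith
  have h1s : (0:ℝ) < 1 - s := by linarith
  have hpos : (0:ℝ) < 2 * r * (1 - s ^ 2) * a := by positivity
  have hfac : (0:ℝ) < s * (1 - s) * (r + s * (r ^ 2 + r + 1)) :=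
    mul_pos (mul_pos hs0 h1s) (by positivity)
  have hden : (0:ℝ) < (((r + s) + r * s * (r * s + 1)) * (r * (r * s + 1) + s * (r + s))) * ((1 + r * s) * (r + s)) := by positivity
  constructor
  · have : 0 ≤ dD - dU := by
      rw [key]
      positivity
    linarith
  · constructor
    · intro h
      have h0 : dD - dU = 0 := by linarith
      rw [key] at h0
      have hnum : (2 * r * (1 - s ^ 2) * a) *
          (s * (1 - s) * (r - 1) ^ 2 * (r + s * (r ^ 2 + r + 1))) = 0 :=
        (div_eq_zero_iff.mp h0).resolve_right (ne_of_gt hden)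
      have hsq : (r - 1) ^ 2 = 0 := by
        by_contra hne
        have : (0:ℝ) < (r - 1) ^ 2 := lt_of_le_of_ne (sq_nonneg _) (Ne.symm hne)
        nlinarith [mul_pos (mul_pos hpos hfac) this]
      have := pow_eq_zero_iff (n := 2) (by norm_num) |>.mp hsq
      linarith
    · intro h
      subst h
      have h0 : dD - dU = 0 := by rw [key]; norm_num
      linarith
end

section
/- If π_{ij} = u_i z_{ij} v_j and π'_{ij} = u'_i z_{ij} v'_j are two doubly stochastic matrices obtained as diagonal scalings of the same strictly positive matrix z by positive vectors, then π = π'. -/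
open Finset

theorem sinkhorn_scaling_unique (S : ℕ) (hS : 0 < S)
    (z : Fin S → Fin S → ℝ) (hz : ∀ i j, 0 < z i j)
    (u v u' v' : Fin S → ℝ)
    (hu : ∀ i, 0 < u i) (hv : ∀ j, 0 < v j)
    (hu' : ∀ i, 0 < u' i) (hv' : ∀ j, 0 < v' j)
    (p p' : Fin S → Fin S → ℝ)
    (hp : ∀ i j, p i j = u i * z i j * v j)
    (hp' : ∀ i j, p' i j = u' i * z i j * v' j)
    (hprow : ∀ i, ∑ j, p i j = 1) (hpcol : ∀ j, ∑ i, p i j = 1)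
    (hprow' : ∀ i, ∑ j, p' i j = 1) (hpcol' : ∀ j, ∑ i, p' i j = 1) :
    p = p' := by
  set r : Fin S → ℝ := fun i => u' i / u i with hr
  set c : Fin S → ℝ := fun j => v' j / v j with hc
  have hrpos : ∀ i, 0 < r i := fun i => div_pos (hu' i) (hu i)
  have hcpos : ∀ j, 0 < c j := fun j => div_pos (hv' j) (hv j)
  have hppos : ∀ i j, 0 < p i j := fun i j => by
    rw [hp]; exact mul_pos (mul_pos (hu i) (hz i j)) (hv j)
  have key : ∀ i j, p' i j = r i * c j * p i j := by
    intro i j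
    have h1 : u i ≠ 0 := (hu i).ne'
    have h2 : v j ≠ 0 := (hv j).ne'
    rw [hp, hp', hr, hc]
    field_simp
  have hrow : ∀ i, r i * ∑ j, c j * p i j = 1 := by
    intro i
    rw [Finset.mul_sum, ← hprow' i]
    exact Finset.sum_congr rfl fun j _ => by rw [key]; ring
  have hcol : ∀ j, c j * ∑ i, r i * p i j = 1 := by
    intro j
    rw [Finset.mul_sum, ← hpcol' j]
    exact Finset.sum_congr rfl fun i _ => by rw [key]; ring
  obtain ⟨i0, -, hi0⟩ := Finset.exists_max_image Finset.univ r ⟨⟨0, hS⟩, Finset.mem_univ _⟩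
  set M := r i0 with hM
  have hMpos : 0 < M := hrpos i0
  have hsumle : ∀ j, ∑ i, r i * p i j ≤ M := by
    intro j
    calc ∑ i, r i * p i j ≤ ∑ i, M * p i j :=
          Finset.sum_le_sum fun i _ =>
            mul_le_mul_of_nonneg_right (hi0 i (Finset.mem_univ i)) (hppos i j).le
      _ = M := by rw [← Finset.mul_sum, hpcol j, mul_one]
  have hcge : ∀ j, 1 / M ≤ c j := by
    intro j
    have hsumpos : 0 < ∑ i, r i * p i j :=
      Finset.sum_pos (fun i _ => mul_pos (hrpos i) (hppos i j)) ⟨i0, Finset.mem_univ i0⟩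
    have h1 := hcol j
    rw [div_le_iff₀ hMpos]
    calc (1:ℝ) = c j * ∑ i, r i * p i j := h1.symm
      _ ≤ c j * M := mul_le_mul_of_nonneg_left (hsumle j) (hcpos j).le
  -- equality at i0 forces c j = 1/M for all j
  have hceq : ∀ j, c j = 1 / M := by
    have hsum0 : ∑ j, (c j - 1/M) * p i0 j = 0 := by
      have h1 : ∑ j, c j * p i0 j = 1 / M := by
        have := hrow i0
        field_simp at this ⊢
        linarith
      have h2 : ∑ j, (1/M) * p i0 j = 1 / M := by
        rw [← Finset.mul_sum, hprow i0, mul_one]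
      calc ∑ j, (c j - 1/M) * p i0 j
          = ∑ j, c j * p i0 j - ∑ j, (1/M) * p i0 j := by
            rw [← Finset.sum_sub_distrib]; exact Finset.sum_congr rfl fun j _ => by ring
        _ = 0 := by rw [h1, h2]; ring
    intro j
    have := (Finset.sum_eq_zero_iff_of_nonneg (fun j _ =>
      mul_nonneg (by linarith [hcge j]) (hppos i0 j).le)).mp hsum0 j (Finset.mem_univ j)
    have hpij := hppos i0 j
    have : c j - 1/M = 0 := by
      by_contra h
      exact h (by
        rcases mul_eq_zero.mp this with h1 | h2
        · exact h1
        · exact absurd h2 hpij.ne')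
    linarith
  -- now each r i = M
  have hreq : ∀ i, r i = M := by
    have hsumM : ∀ j, ∑ i, r i * p i j = M := by
      intro j
      have h1 := hcol j
      rw [hceq j] at h1
      field_simp at h1
      linarith
    have hsum0 : ∑ i, (M - r i) * p i ⟨0, hS⟩ = 0 := by
      calc ∑ i, (M - r i) * p i ⟨0, hS⟩
          = ∑ i, M * p i ⟨0, hS⟩ - ∑ i, r i * p i ⟨0, hS⟩ := by
            rw [← Finset.sum_sub_distrib]; exact Finset.sum_congr rfl fun i _ => by ring
        _ = 0 := by rw [← Finset.mul_sum, hpcol, hsumM, mul_one]; ring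
    intro i
    have := (Finset.sum_eq_zero_iff_of_nonneg (fun i _ =>
      mul_nonneg (by linarith [hi0 i (Finset.mem_univ i)]) (hppos i _).le)).mp hsum0 i
      (Finset.mem_univ i)
    have hpij := hppos i ⟨0, hS⟩
    rcases mul_eq_zero.mp this with h1 | h2
    · linarith
    · exact absurd h2 hpij.ne'
  funext i j
  rw [key i j, hreq i, hceq j]
  field_simp
end
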